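/- Recurrence satisfied by the left-hand side of the finite Jacobi identity: let J(L) = ∑_{l=0}^{L} a^{-l} (1 + a^{2l+1})/(1+a) q^{T_l}. Then for all L ≥ 0: -a q^{9+3L} J(L) + q^{7+2L}(1 - a + a² + a q^{2+L}) J(L+1) - (1 - a + a²) q^{4+L}(q^{3+L} - 1) J(L+2) + (-a - q^{4+L} + a q^{4+L} - a² q^{4+L}) J(L+3) + a J(L+4) = 0. -/
import Mathlib


open Finset

/-- The field of rational functions in two indeterminates `a` and `q` over `ℚ`. -/
noncomputable abbrev K2 : Type := RatFunc (Polynomial ℚ)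

/-- The indeterminate `q`. -/
noncomputable def q : K2 := RatFunc.X

/-- The indeterminate `a`. -/
noncomputable def a : K2 := RatFunc.C Polynomial.X

/-- Triangular number `T m = m(m+1)/2`. -/
def T (m : ℤ) : ℤ := m * (m + 1) / 2

/-- The Gaussian binomial coefficient in base `q`: `C(N, n) = (q^{N-n+1};q)_n / (q;q)_n`
for `n ≥ 0`, and `0` when out of range (`n < 0`; for `0 ≤ N < n` the product contains
the factor `1 - q^0 = 0`, so it vanishes). -/
noncomputable def qbin (N n : ℤ) : K2 :=
  if n < 0 then 0
  else ∏ r ∈ Finset.range n.toNat, (1 - q ^ (N - (r : ℤ))) / (1 - q ^ ((r : ℤ) + 1))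

/-- Right-hand side of the finite Jacobi identity: the sum over all `i, j, k ≥ 0`;
terms with `i > L`, `j > L` or `k > L` vanish since the corresponding `qbin` is `0`,
so the ranges below capture the full triple sum. -/
noncomputable def S (L : ℕ) : K2 :=
  ∑ i ∈ Finset.range (L + 1), ∑ j ∈ Finset.range (L + 1), ∑ k ∈ Finset.range (L + 1),
    a ^ ((i : ℤ) - j) * (-1) ^ k * q ^ (T i + T j + T k) *
      qbin ((L : ℤ) - k) i * qbin ((L : ℤ) - i) j * qbin ((L : ℤ) - j) k

/-- Left-hand side of the finite Jacobi identity. -/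
noncomputable def J (L : ℕ) : K2 :=
  ∑ l ∈ Finset.range (L + 1), a ^ (-(l : ℤ)) * ((1 + a ^ (2 * l + 1)) / (1 + a)) * q ^ (T l)

set_option maxHeartbeats 1600000

lemma hCne (p : Polynomial ℚ) (hp : p ≠ 0) : RatFunc.C p ≠ 0 := by
  have : RatFunc.C p = algebraMap (Polynomial (Polynomial ℚ)) K2 (Polynomial.C p) := by
    rw [RatFunc.C, IsScalarTower.algebraMap_apply (Polynomial ℚ) (Polynomial (Polynomial ℚ)) K2]
    simp
  rw [this]
  exact RatFunc.algebraMap_ne_zero (by simpa using hp)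

lemma ha : a ≠ 0 := hCne _ Polynomial.X_ne_zero
lemma hq : q ≠ 0 := RatFunc.algebraMap_ne_zero Polynomial.X_ne_zero
lemma h1a : (1:K2) + a ≠ 0 := by
  have h : (1 : K2) + a = RatFunc.C (1 + Polynomial.X) := by simp [a]
  rw [h]
  exact hCne _ (by simpa [add_comm] using Polynomial.X_add_C_ne_zero (1:ℚ))

lemma twoT (m : ℤ) : 2 * T m = m * (m + 1) :=
  Int.mul_ediv_cancel' (Int.even_mul_succ_self m).two_dvd

noncomputable def Gs (n : ℕ) : K2 := ∑ i ∈ Finset.range (2*n+1), (-a)^i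

lemma geom (m : ℕ) : (1 + a^(2*m+1))/(1+a) = Gs m := by
  rw [eq_comm, eq_div_iff h1a]
  have h := geom_sum_mul (-a) (2*m+1)
  have ho : (-a)^(2*m+1) = -(a^(2*m+1)) := Odd.neg_pow ⟨m, by ring⟩ a
  rw [ho] at h
  rw [Gs]
  linear_combination -h

lemma gstep (n : ℕ) : Gs (n+1) = Gs n - a^(2*n+1) + a^(2*n+2) := by
  rw [Gs, Gs, show 2*(n+1)+1 = (2*n+1)+1+1 from by ring, Finset.sum_range_succ,
    Finset.sum_range_succ]
  have h1 : (-a)^(2*n+1) = -(a^(2*n+1)) := Odd.neg_pow ⟨n, by ring⟩ a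
  have h2 : (-a)^(2*n+1+1) = a^(2*n+2) := by
    rw [show 2*n+1+1 = 2*(n+1) from by ring]
    exact Even.neg_pow ⟨n+1, by ring⟩ a
  rw [h1, h2]
  ring

lemma J_step (n : ℕ) : J (n+1) = J n +
    a ^ (-((n+1 : ℕ) : ℤ)) * ((1 + a ^ (2 * (n+1) + 1)) / (1 + a)) * q ^ (T ((n+1 : ℕ) : ℤ)) := by
  rw [J, Finset.sum_range_succ, ← J]

/-- The same recurrence of order 4 is satisfied by the left-hand side of the
finite Jacobi identity. -/
theorem finite_jacobi_lhs_recurrence (L : ℕ) :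
    -(a * q ^ (9 + 3 * L) * J L) +
        q ^ (7 + 2 * L) * (1 - a + a ^ 2 + a * q ^ (2 + L)) * J (L + 1) -
        (1 - a + a ^ 2) * q ^ (4 + L) * (q ^ (3 + L) - 1) * J (L + 2) +
        (-a - q ^ (4 + L) + a * q ^ (4 + L) - a ^ 2 * q ^ (4 + L)) * J (L + 3) +
        a * J (L + 4) = 0 := by
  rw [show L + 4 = (L+3)+1 from rfl, J_step (L+3), J_step (L+2), J_step (L+1), J_step L]
  have key : ∀ k : ℕ, T ((L+k : ℕ) : ℤ) = T (L : ℤ) + (((k*L : ℕ) : ℤ) + ((T k : ℤ))) := by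
    intro k
    have h1 := twoT (L:ℤ)
    have h2 := twoT ((L+k : ℕ) : ℤ)
    have h3 := twoT (k:ℕ)
    have hr : ((L+k : ℕ) : ℤ) * (((L+k : ℕ) : ℤ) + 1)
        = (L:ℤ) * ((L:ℤ)+1) + 2*((k*L : ℕ) : ℤ) + (k:ℤ)*((k:ℤ)+1) := by push_cast; ring
    linarith [h1, h2, h3, hr]
  have t1 : T ((L+1 : ℕ) : ℤ) = T (L:ℤ) + (((1*L : ℕ):ℤ) + 1) := by
    rw [key 1]; norm_num [show T (1:ℤ) = 1 from rfl]
  have t2 : T ((L+2 : ℕ) : ℤ) = T (L:ℤ) + (((2*L : ℕ):ℤ) + 3) := by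
    rw [key 2]; norm_num [show T (2:ℤ) = 3 from rfl]
  have t3 : T ((L+3 : ℕ) : ℤ) = T (L:ℤ) + (((3*L : ℕ):ℤ) + 6) := by
    rw [key 3]; norm_num [show T (3:ℤ) = 6 from rfl]
  have t4 : T ((L+4 : ℕ) : ℤ) = T (L:ℤ) + (((4*L : ℕ):ℤ) + 10) := by
    rw [key 4]; norm_num [show T (4:ℤ) = 10 from rfl]
  rw [show L+1+1 = L+2 from rfl, show L+2+1 = L+3 from rfl, show (L+3)+1 = L+4 from rfl]
  rw [t1, t2, t3, t4, geom (L+1), geom (L+2), geom (L+3), geom (L+4)]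
  have g2 : Gs (L+2) = Gs (L+1) - a^(2*(L+1)+1) + a^(2*(L+1)+2) := gstep (L+1)
  have g3 : Gs (L+3) = Gs (L+2) - a^(2*(L+2)+1) + a^(2*(L+2)+2) := gstep (L+2)
  have g4 : Gs (L+4) = Gs (L+3) - a^(2*(L+3)+1) + a^(2*(L+3)+2) := gstep (L+3)
  rw [g4, g3, g2]
  simp only [zpow_add₀ hq, zpow_neg, zpow_natCast, zpow_one, zpow_ofNat]
  have i1 : ((a:K2)^(L+1))⁻¹ = a^3 * ((a:K2)^(L+4))⁻¹ := by
    field_simp [pow_ne_zero _ ha]; ring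
  have i2 : ((a:K2)^(L+2))⁻¹ = a^2 * ((a:K2)^(L+4))⁻¹ := by
    field_simp [pow_ne_zero _ ha]; ring
  have i3 : ((a:K2)^(L+3))⁻¹ = a^1 * ((a:K2)^(L+4))⁻¹ := by
    field_simp [pow_ne_zero _ ha]; ring
  rw [i1, i2, i3]
  ring
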